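/- In the formal division g = Σ h_i f_i + r(g) of a power series g by f_1,…,f_k with initial exponents α_i of the diagram, if additionally ord(f_i) = |α_i| for all i, then ord(r(g)) ≥ ord(g) and ord(h_i) ≥ ord(g) − |α_i|. -/

import Mathlib

/-- The value `T̄(a) ∈ ℝ^r` of the tuple of linear forms with coefficient
matrix `c` at `a ∈ ℕ^n`. -/
def tvec {n r : ℕ} (c : Fin r → Fin n → ℝ) (a : Fin n →₀ ℕ) : Fin r → ℝ :=
  fun i => ∑ j, c i j * (a j : ℝ)

/-- The translated quadrant `v + ℕ^n`. -/
def quad {n : ℕ} (v : Fin n →₀ ℕ) : Set (Fin n →₀ ℕ) := {b | ∃ g, b = v + g}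

/-- `Δ_i = (α_i + ℕ^n) \ ⋃_{j<i} (α_j + ℕ^n)`. -/
def deltaI {n k : ℕ} (α : Fin k → (Fin n →₀ ℕ)) (i : Fin k) : Set (Fin n →₀ ℕ) :=
  quad (α i) \ ⋃ (j : Fin k) (_ : j < i), quad (α j)

/-- `Γ = ℕ^n \ ⋃_i (α_i + ℕ^n)`. -/
def gammaSet {n k : ℕ} (α : Fin k → (Fin n →₀ ℕ)) : Set (Fin n →₀ ℕ) :=
  (⋃ i : Fin k, quad (α i))ᶜ

/-- `Γ_i = Δ_i − α_i`. -/
def gammaI {n k : ℕ} (α : Fin k → (Fin n →₀ ℕ)) (i : Fin k) : Set (Fin n →₀ ℕ) :=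
  {g | α i + g ∈ deltaI α i}

/-- The total degree `|a| = a_1 + … + a_n` of an exponent. -/
def degE {n : ℕ} (a : Fin n →₀ ℕ) : ℕ := a.sum fun _ e => e

/-- The order `ord(f)` of a formal power series: the minimum of `|a|` over the
support of `f` (equal to `⊤` for `f = 0`), as an element of `ℕ∞`. -/
noncomputable def ordF {K : Type*} [Field K] {n : ℕ}
    (f : MvPowerSeries (Fin n) K) : ℕ∞ :=
  ⨅ (d : Fin n →₀ ℕ) (_ : MvPowerSeries.coeff d f ≠ 0), (degE d : ℕ∞)

lemma degE_add {n : ℕ} (a b : Fin n →₀ ℕ) : degE (a + b) = degE a + degE b := by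
  classical
  exact Finsupp.sum_add_index' (fun _ => rfl) (fun _ _ _ => rfl)

lemma tvec_add {n r : ℕ} (c : Fin r → Fin n → ℝ) (a b : Fin n →₀ ℕ) :
    tvec c (a + b) = tvec c a + tvec c b := by
  funext i
  simp only [tvec, Pi.add_apply, ← Finset.sum_add_distrib]
  refine Finset.sum_congr rfl fun j _ => ?_
  have : ((a + b) j : ℝ) = (a j : ℝ) + (b j : ℝ) := by
    simp [Finsupp.add_apply]
  rw [this]; ring

lemma lex_add_left {m : ℕ} (z x y : Fin m → ℝ) (h : toLex x < toLex y) :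
    toLex (z + x) < toLex (z + y) := by
  obtain ⟨i, hji, hi⟩ := h
  exact ⟨i, fun j hj => by simpa using congrArg (z j + ·) (hji j hj), by simpa using hi⟩

lemma le_degE {n : ℕ} (d : Fin n →₀ ℕ) (j : Fin n) : d j ≤ degE d := by
  classical
  by_cases hj : j ∈ d.support
  · exact Finset.single_le_sum (f := fun a => d a) (fun _ _ => Nat.zero_le _) hj
  · simp [Finsupp.notMem_support_iff.mp hj]

lemma ordF_le {K : Type*} [Field K] {n : ℕ} {f : MvPowerSeries (Fin n) K}
    {d : Fin n →₀ ℕ} (hd : MvPowerSeries.coeff d f ≠ 0) :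
    ordF f ≤ (degE d : ℕ∞) :=
  iInf_le_of_le d (iInf_le _ hd)

lemma ordF_attain {K : Type*} [Field K] {n : ℕ} {f : MvPowerSeries (Fin n) K}
    (hf : ordF f ≠ ⊤) :
    ∃ d, MvPowerSeries.coeff d f ≠ 0 ∧ ordF f = (degE d : ℕ∞) := by
  classical
  have hne : ∃ d, MvPowerSeries.coeff d f ≠ 0 := by
    by_contra hc
    push_neg at hc
    exact hf (by simp [ordF, hc])
  obtain ⟨d0, hd0⟩ := hne
  have hS : {m : ℕ | ∃ d, MvPowerSeries.coeff d f ≠ 0 ∧ degE d = m}.Nonempty := by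
    exact ⟨degE d0, ⟨d0, hd0, rfl⟩⟩
  obtain ⟨d, hd, hdeg⟩ := Nat.sInf_mem hS
  refine ⟨d, hd, le_antisymm (ordF_le hd) ?_⟩
  refine le_iInf fun e => le_iInf fun he => ?_
  rw [hdeg]
  have hmem : degE e ∈ {m : ℕ | ∃ d, MvPowerSeries.coeff d f ≠ 0 ∧ degE d = m} :=
    ⟨e, he, rfl⟩
  exact_mod_cast Nat.sInf_le hmem

/-- In the formal division `g = Σ h_i f_i + r(g)` by `f_1,…,f_k` with initial
exponents `α_i` (with respect to a total normalized positive monomial order),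
if additionally `ord(f_i) = |α_i|` for all `i`, then `ord(r(g)) ≥ ord(g)` and
`ord(h_i) ≥ ord(g) − |α_i|`. -/
theorem formal_division_order_bounds {K : Type*} [Field K] {n k r : ℕ}
    (c : Fin (r + 1) → Fin n → ℝ)
    (hnorm : ∀ j, c 0 j = 1)
    (hnonneg : ∀ i j, 0 ≤ c i j)
    (htotal : Function.Injective fun a : Fin n →₀ ℕ => tvec c a)
    (f : Fin k → MvPowerSeries (Fin n) K)
    (α : Fin k → (Fin n →₀ ℕ))
    (hexp : ∀ i : Fin k,
      MvPowerSeries.coeff (α i) (f i) ≠ 0 ∧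
      ∀ b : Fin n →₀ ℕ, MvPowerSeries.coeff b (f i) ≠ 0 → b ≠ α i →
        toLex (tvec c (α i)) < toLex (tvec c b))
    (hord : ∀ i, ordF (f i) = (degE (α i) : ℕ∞))
    (g : MvPowerSeries (Fin n) K)
    (h : Fin k → MvPowerSeries (Fin n) K) (rg : MvPowerSeries (Fin n) K)
    (hsupph : ∀ i : Fin k, ∀ d, MvPowerSeries.coeff d (h i) ≠ 0 →
      d ∈ gammaI α i)
    (hsuppr : ∀ d, MvPowerSeries.coeff d rg ≠ 0 → d ∈ gammaSet α)
    (hdiv : g = (∑ i, h i * f i) + rg) :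
    ordF g ≤ ordF rg ∧ ∀ i : Fin k, ordF g - (degE (α i) : ℕ∞) ≤ ordF (h i) := by
  classical
  by_contra hcon
  push_neg at hcon
  -- the minimal "level"
  set v : Fin k → ℕ∞ := fun i => ordF (h i) + (degE (α i) : ℕ∞)
  have hm : min (ordF rg) (⨅ i, v i) < ordF g := by
    rcases lt_or_ge (ordF rg) (ordF g) with hlt | hge
    · exact lt_of_le_of_lt (min_le_left _ _) hlt
    · obtain ⟨i, hi⟩ := hcon hge
      have hcanc : AddLECancellable ((degE (α i) : ℕ∞)) :=
        ENat.addLECancellable_of_ne_top (by simp)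
      have : v i < ordF g := hcanc.lt_tsub_iff_right.mp hi
      exact lt_of_le_of_lt (le_trans (min_le_right _ _) (iInf_le _ i)) this
  have hmne : min (ordF rg) (⨅ i, v i) ≠ ⊤ := hm.ne_top
  lift min (ordF rg) (⨅ i, v i) to ℕ using hmne with M hM
  have hMr : (M : ℕ∞) ≤ ordF rg := hM.le.trans (min_le_left _ _)
  have hMh : ∀ i, (M : ℕ∞) ≤ v i := fun i =>
    le_trans (hM.le.trans (min_le_right _ _)) (iInf_le _ i)
  have hMg : (M : ℕ∞) < ordF g := hm
  -- basic degree bounds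
  have hA : ∀ d, MvPowerSeries.coeff d rg ≠ 0 → M ≤ degE d := by
    intro d hd
    exact_mod_cast hMr.trans (ordF_le hd)
  have hB : ∀ i e, MvPowerSeries.coeff e (h i) ≠ 0 → M ≤ degE e + degE (α i) := by
    intro i e he
    have : (M : ℕ∞) ≤ (degE e : ℕ∞) + (degE (α i) : ℕ∞) :=
      (hMh i).trans (add_le_add_left (ordF_le he) _)
    exact_mod_cast this
  have hC : ∀ i b, MvPowerSeries.coeff b (f i) ≠ 0 → degE (α i) ≤ degE b := by
    intro i b hb
    have := (hord i).symm.trans_le (ordF_le hb)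
    exact_mod_cast this
  -- the finite set of level-M candidates
  set D : Set (Fin n →₀ ℕ) :=
    {d | degE d = M ∧ (MvPowerSeries.coeff d rg ≠ 0 ∨
      ∃ i e, MvPowerSeries.coeff e (h i) ≠ 0 ∧ d = e + α i)} with hD
  have hDfin : D.Finite := by
    refine Set.Finite.subset (Set.finite_Iic (Finsupp.equivFunOnFinite.symm fun _ => M)) ?_
    intro d hd
    rw [Set.mem_Iic, Finsupp.le_def]
    intro j
    simpa [Finsupp.equivFunOnFinite] using hd.1 ▸ le_degE d j
  have hDne : D.Nonempty := by
    rcases le_total (ordF rg) (⨅ i, v i) with hc | hc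
    · have hrM : ordF rg = (M : ℕ∞) := by rw [hM]; exact (min_eq_left hc).symm
      obtain ⟨d, hd, hdeg⟩ := ordF_attain (f := rg) (by rw [hrM]; simp)
      refine ⟨d, ?_, Or.inl hd⟩
      have : (degE d : ℕ∞) = (M : ℕ∞) := by rw [← hdeg, hrM]
      exact_mod_cast this
    · have hiM : (⨅ i, v i) = (M : ℕ∞) := by rw [hM]; exact (min_eq_right hc).symm
      have hk : Nonempty (Fin k) := by
        by_contra hk
        haveI := not_nonempty_iff.mp hk
        rw [iInf_of_empty] at hiM
        exact (by simp : (⊤ : ℕ∞) ≠ (M : ℕ∞)) hiM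
      obtain ⟨i₀, -, hi₀⟩ := Finset.exists_min_image Finset.univ v
        ⟨hk.some, Finset.mem_univ _⟩
      have hvi₀ : v i₀ = (M : ℕ∞) := by
        refine le_antisymm ?_ (hiM ▸ iInf_le _ i₀)
        rw [← hiM]
        exact le_iInf fun j => hi₀ j (Finset.mem_univ _)
      have hvi₀' : ordF (h i₀) + (degE (α i₀) : ℕ∞) = (M : ℕ∞) := hvi₀
      have hhne : ordF (h i₀) ≠ ⊤ := by
        intro htop
        rw [htop, top_add] at hvi₀'
        exact (by simp : (⊤ : ℕ∞) ≠ (M : ℕ∞)) hvi₀'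
      obtain ⟨e, he, hdeg⟩ := ordF_attain hhne
      refine ⟨e + α i₀, ?_, Or.inr ⟨i₀, e, he, rfl⟩⟩
      have : ((degE e + degE (α i₀) : ℕ) : ℕ∞) = (M : ℕ∞) := by
        push_cast
        rw [← hdeg]
        exact hvi₀'
      rw [degE_add]
      exact_mod_cast this
  -- choose δ minimizing the monomial order among candidates
  letI : WellFoundedLT (Fin (r + 1)) := Finite.to_wellFoundedLT
  obtain ⟨δ, hδD', hδmin'⟩ := Finset.exists_min_image hDfin.toFinset
    (fun d => toLex (tvec c d)) (by
      obtain ⟨d, hd⟩ := hDne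
      exact ⟨d, hDfin.mem_toFinset.mpr hd⟩)
  have hδD : δ ∈ D := hDfin.mem_toFinset.mp hδD'
  have hδmin : ∀ d ∈ D, toLex (tvec c δ) ≤ toLex (tvec c d) := fun d hd =>
    hδmin' d (hDfin.mem_toFinset.mpr hd)
  -- key structure of nonzero product terms at δ
  have hkey : ∀ (i : Fin k), ∀ p ∈ Finset.HasAntidiagonal.antidiagonal δ,
      MvPowerSeries.coeff p.1 (h i) * MvPowerSeries.coeff p.2 (f i) ≠ 0 →
      p.2 = α i ∧ p.1 + α i = δ := by
    intro i p hp hne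
    have he : MvPowerSeries.coeff p.1 (h i) ≠ 0 := fun h0 => hne (by rw [h0, zero_mul])
    have hb : MvPowerSeries.coeff p.2 (f i) ≠ 0 := fun h0 => hne (by rw [h0, mul_zero])
    have hpsum : p.1 + p.2 = δ := Finset.HasAntidiagonal.mem_antidiagonal.mp hp
    have hdsum : degE p.1 + degE p.2 = M := by rw [← degE_add, hpsum, hδD.1]
    have h1 := hC i p.2 hb
    have h2 := hB i p.1 he
    have hdeq : degE p.1 + degE (α i) = M := by omega
    have hbeq : p.2 = α i := by
      by_contra hbne
      have hlex := (hexp i).2 p.2 hb hbne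
      have hd'D : p.1 + α i ∈ D := ⟨by rw [degE_add]; exact hdeq, Or.inr ⟨i, p.1, he, rfl⟩⟩
      have hlt : toLex (tvec c (p.1 + α i)) < toLex (tvec c δ) := by
        rw [← hpsum, tvec_add, tvec_add]
        exact lex_add_left _ _ _ hlex
      exact absurd (hδmin _ hd'D) hlt.not_ge
    exact ⟨hbeq, by rw [← hbeq]; exact hpsum⟩
  -- the coefficient of g at δ is nonzero
  have hgδ : MvPowerSeries.coeff δ g ≠ 0 := by
    have hcg : MvPowerSeries.coeff δ g =
        (∑ i, MvPowerSeries.coeff δ (h i * f i)) + MvPowerSeries.coeff δ rg := by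
      rw [hdiv, map_add, map_sum]
    rcases hδD.2 with hr | ⟨i₀, e₀, he₀, hδeq⟩
    · -- case δ ∈ supp rg
      have hγ : δ ∈ gammaSet α := hsuppr δ hr
      have hzero : ∀ i : Fin k, MvPowerSeries.coeff δ (h i * f i) = 0 := by
        intro i
        rw [MvPowerSeries.coeff_mul]
        refine Finset.sum_eq_zero fun p hp => ?_
        by_contra hne
        obtain ⟨-, hsum⟩ := hkey i p hp hne
        exact hγ (Set.mem_iUnion.mpr ⟨i, ⟨p.1, by rw [← hsum, add_comm]⟩⟩)
      rw [hcg, Finset.sum_eq_zero fun i _ => hzero i, zero_add]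
      exact hr
    · -- case δ = e₀ + α i₀ with e₀ ∈ supp (h i₀)
      have hΔ : δ ∈ deltaI α i₀ := by
        have := hsupph i₀ e₀ he₀
        rw [hδeq, add_comm]
        exact this
      have hrz : MvPowerSeries.coeff δ rg = 0 := by
        by_contra hrz
        exact (hsuppr δ hrz) (Set.mem_iUnion.mpr ⟨i₀, hΔ.1⟩)
      have hzero : ∀ j ∈ Finset.univ, j ≠ i₀ → MvPowerSeries.coeff δ (h j * f j) = 0 := by
        intro j _ hji
        rw [MvPowerSeries.coeff_mul]
        refine Finset.sum_eq_zero fun p hp => ?_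
        by_contra hne
        obtain ⟨-, hsum⟩ := hkey j p hp hne
        have he : MvPowerSeries.coeff p.1 (h j) ≠ 0 :=
          fun h0 => hne (by rw [h0, zero_mul])
        have hΔj : δ ∈ deltaI α j := by
          have := hsupph j p.1 he
          rw [← hsum, add_comm]
          exact this
        rcases lt_trichotomy j i₀ with hlt | heq | hlt
        · exact hΔ.2 (Set.mem_iUnion.mpr ⟨j, Set.mem_iUnion.mpr ⟨hlt, hΔj.1⟩⟩)
        · exact hji heq
        · exact hΔj.2 (Set.mem_iUnion.mpr ⟨i₀, Set.mem_iUnion.mpr ⟨hlt, hΔ.1⟩⟩)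
      have hmain : MvPowerSeries.coeff δ (h i₀ * f i₀) =
          MvPowerSeries.coeff e₀ (h i₀) * MvPowerSeries.coeff (α i₀) (f i₀) := by
        rw [MvPowerSeries.coeff_mul]
        refine Finset.sum_eq_single (e₀, α i₀) ?_ ?_
        · intro p hp hpne
          by_contra hne
          obtain ⟨hb, hsum⟩ := hkey i₀ p hp hne
          have : p.1 = e₀ := by
            have : p.1 + α i₀ = e₀ + α i₀ := by rw [hsum, hδeq]
            exact add_right_cancel this
          exact hpne (Prod.ext this hb)
        · intro habs
          exact absurd (Finset.HasAntidiagonal.mem_antidiagonal.mpr hδeq.symm) habs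
      rw [hcg, Finset.sum_eq_single_of_mem i₀ (Finset.mem_univ _) hzero, hmain, hrz, add_zero]
      exact mul_ne_zero he₀ (hexp i₀).1
  have : ordF g ≤ (M : ℕ∞) := by
    have := ordF_le hgδ
    rwa [hδD.1] at this
  exact absurd this hMg.not_ge
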